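/- The collection of bases of an oriented even Δ-matroid is a Δ-matroid: if p : 2^I → {−1,0,1} satisfies the oriented even Δ-matroid axioms, then B = {A ⊆ I : p(A) ≠ 0} satisfies the symmetric exchange axiom. -/
import Mathlib


/-- An **oriented even Δ-matroid** on `I = {1,…,n}`: a map
`p : 2^I → {+1, −1, 0}` such that (1) `p` is not identically zero; (2) any two sets
with nonzero value have cardinalities of equal parity; (3) whenever
`A Δ B = {i₁ < … < i_l}` and, for some `w ∈ {+1, −1}`, all the quantities
`κ_j = w (−1)^j p(A Δ {i_j}) p(B Δ {i_j})` are nonnegative, they are all zero. -/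
def IsOrientedEvenDeltaMatroid {n : ℕ} (p : Finset (Fin n) → SignType) : Prop :=
  (∃ S, p S ≠ 0) ∧
  (∀ A B : Finset (Fin n), p A ≠ 0 → p B ≠ 0 → A.card % 2 = B.card % 2) ∧
  (∀ A B : Finset (Fin n), ∀ w : SignType, (w = 1 ∨ w = -1) →
    (∀ j : Fin (symmDiff A B).card,
      0 ≤ w * (-1 : SignType) ^ ((j : ℕ) + 1) *
        p (symmDiff A {((symmDiff A B).orderIsoOfFin rfl j : Fin n)}) *
        p (symmDiff B {((symmDiff A B).orderIsoOfFin rfl j : Fin n)})) →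
    (∀ j : Fin (symmDiff A B).card,
      w * (-1 : SignType) ^ ((j : ℕ) + 1) *
        p (symmDiff A {((symmDiff A B).orderIsoOfFin rfl j : Fin n)}) *
        p (symmDiff B {((symmDiff A B).orderIsoOfFin rfl j : Fin n)}) = 0))

set_option maxHeartbeats 1000000 in
/-- The collection of bases of an oriented even Δ-matroid is a Δ-matroid: the
support `{A : p A ≠ 0}` satisfies the symmetric exchange axiom: for `E, F` in the
support and `e ∈ E Δ F` there exists `f ∈ E Δ F` with `E Δ {e, f}` in the support. -/
theorem orientedEvenDeltaMatroid_bases_deltaMatroid {n : ℕ}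
    (p : Finset (Fin n) → SignType) (hp : IsOrientedEvenDeltaMatroid p) :
    ∀ E F : Finset (Fin n), p E ≠ 0 → p F ≠ 0 → ∀ e ∈ symmDiff E F,
      ∃ f ∈ symmDiff E F, p (symmDiff E {e, f}) ≠ 0 := by
  intro E F hE hF e he
  by_contra hcon
  push_neg at hcon
  obtain ⟨-, -, hax⟩ := hp
  set A := symmDiff E {e} with hA
  set B := symmDiff F {e} with hB
  have hAB : symmDiff A B = symmDiff E F := by
    rw [hA, hB, symmDiff_comm F {e}, symmDiff_assoc, symmDiff_symmDiff_cancel_left]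
  have he' : e ∈ symmDiff A B := hAB ▸ he
  set iso := (symmDiff A B).orderIsoOfFin rfl with hiso
  set j0 : Fin (symmDiff A B).card := iso.symm ⟨e, he'⟩ with hj0
  have hj0e : ((iso j0 : {x // x ∈ symmDiff A B}) : Fin n) = e := by
    rw [hj0, OrderIso.apply_symm_apply]
  -- cancellation: A Δ {e} = E, B Δ {e} = F
  have hAe : symmDiff A {e} = E := symmDiff_symmDiff_cancel_right {e} E
  have hBe : symmDiff B {e} = F := symmDiff_symmDiff_cancel_right {e} F
  have hc : ((-1 : SignType) ^ ((j0 : ℕ) + 1) = 1) ∨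
      ((-1 : SignType) ^ ((j0 : ℕ) + 1) = -1) := by
    rcases Nat.even_or_odd ((j0 : ℕ) + 1) with h | h
    · exact Or.inl h.neg_one_pow
    · exact Or.inr h.neg_one_pow
  have hE1 : p E = 1 ∨ p E = -1 := by
    cases h : p E with
    | zero => exact absurd h hE
    | neg => exact Or.inr rfl
    | pos => exact Or.inl rfl
  have hF1 : p F = 1 ∨ p F = -1 := by
    cases h : p F with
    | zero => exact absurd h hF
    | neg => exact Or.inr rfl
    | pos => exact Or.inl rfl
  set w : SignType := (-1 : SignType) ^ ((j0 : ℕ) + 1) * p E * p F with hw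
  have hw1 : w = 1 ∨ w = -1 := by
    rcases hc with h1 | h1 <;> rcases hE1 with h2 | h2 <;> rcases hF1 with h3 | h3 <;>
      rw [hw, h1, h2, h3] <;> decide
  have hwe : w * (-1 : SignType) ^ ((j0 : ℕ) + 1) * p E * p F = 1 := by
    rcases hc with h1 | h1 <;> rcases hE1 with h2 | h2 <;> rcases hF1 with h3 | h3 <;>
      rw [hw, h1, h2, h3] <;> decide
  have key : ∀ j : Fin (symmDiff A B).card,
      0 ≤ w * (-1 : SignType) ^ ((j : ℕ) + 1) *
        p (symmDiff A {((symmDiff A B).orderIsoOfFin rfl j : Fin n)}) *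
        p (symmDiff B {((symmDiff A B).orderIsoOfFin rfl j : Fin n)}) := by
    intro j
    by_cases hj : j = j0
    · subst hj
      rw [show ((symmDiff A B).orderIsoOfFin rfl j0 : Fin n) = e from hj0e, hAe, hBe, hwe]
      decide
    · set i : Fin n := ((symmDiff A B).orderIsoOfFin rfl j : Fin n) with hi
      have hine : i ≠ e := by
        intro hie
        apply hj
        have : ((symmDiff A B).orderIsoOfFin rfl j : {x // x ∈ symmDiff A B}) = ⟨e, he'⟩ :=
          Subtype.ext (by rw [← hi]; exact hie)
        rw [hj0, ← this]
        exact (iso.symm_apply_apply j).symm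
      have himem : i ∈ symmDiff E F := by
        rw [← hAB]
        exact ((symmDiff A B).orderIsoOfFin rfl j).2
      have hzero : p (symmDiff A {i}) = 0 := by
        have hd : Disjoint ({e} : Finset (Fin n)) {i} :=
          Finset.disjoint_singleton.mpr (Ne.symm hine)
        have hsing : symmDiff ({e} : Finset (Fin n)) {i} = {e, i} := by
          rw [hd.symmDiff_eq_sup, Finset.sup_eq_union, ← Finset.insert_eq]
        have hset : symmDiff A {i} = symmDiff E {e, i} := by
          rw [hA, symmDiff_assoc, hsing]
        rw [hset]
        exact hcon i himem
      simp [hzero]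
  have hall := hax A B w hw1 key j0
  rw [show ((symmDiff A B).orderIsoOfFin rfl j0 : Fin n) = e from hj0e, hAe, hBe] at hall
  rw [hwe] at hall
  exact one_ne_zero hall
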